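/- For all natural numbers r ≤ n, the r-th x-derivative satisfies ∂_x^r H_n(x,y|λ) = (n!/(n-r)!) · (log(1+λ)/λ)^r · H_{n-r}(x,y|λ). -/

import Mathlib

open Real Finset MeasureTheory

noncomputable def dH (l x y : ℝ) (n : ℕ) : ℝ :=
  ∑ k ∈ Finset.range (n / 2 + 1),
    (Nat.factorial n : ℝ) / ((Nat.factorial (n - 2 * k) : ℝ) * (Nat.factorial k : ℝ)) *
      (Real.log (1 + l) / l) ^ (n - k) * x ^ (n - 2 * k) * y ^ k

lemma alg1 (N F b k d c p xp yk : ℝ) (hb : b ≠ 0) (hk : k ≠ 0) (hd : d ≠ 0) :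
    N * F / (d * b * k) * (p * c) * (d * xp) * yk = N * c * (F / (b * k) * p * xp * yk) := by
  field_simp

lemma alg2 (N F d c cp D : ℝ) (hF : F ≠ 0) (hd : d ≠ 0) :
    N / (d * F) * cp * (d * c * D) = N / F * (cp * c) * D := by
  field_simp

lemma dH_hasDerivAt (l y : ℝ) (n : ℕ) (x : ℝ) :
    HasDerivAt (fun x' => dH l x' y n)
      ((n : ℝ) * (Real.log (1 + l) / l) * dH l x y (n - 1)) x := by
  set c := Real.log (1 + l) / l with hc
  have h : HasDerivAt (fun x' => dH l x' y n)
      (∑ k ∈ Finset.range (n / 2 + 1),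
        (Nat.factorial n : ℝ) / ((Nat.factorial (n - 2 * k) : ℝ) * (Nat.factorial k : ℝ)) *
          c ^ (n - k) * (((n - 2 * k : ℕ) : ℝ) * x ^ (n - 2 * k - 1)) * y ^ k) x := by
    unfold dH
    apply HasDerivAt.fun_sum
    intro k hk
    exact ((hasDerivAt_pow (n - 2 * k) x).const_mul _).mul_const _
  have e : (∑ k ∈ Finset.range (n / 2 + 1),
        (Nat.factorial n : ℝ) / ((Nat.factorial (n - 2 * k) : ℝ) * (Nat.factorial k : ℝ)) *
          c ^ (n - k) * (((n - 2 * k : ℕ) : ℝ) * x ^ (n - 2 * k - 1)) * y ^ k)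
      = (n : ℝ) * c * dH l x y (n - 1) := by
    cases n with
    | zero => simp [dH]
    | succ m =>
      have hsub : Finset.range (m / 2 + 1) ⊆ Finset.range ((m + 1) / 2 + 1) :=
        Finset.range_subset_range.mpr (by omega)
      rw [← Finset.sum_subset hsub (by
        intro k hk1 hk2
        simp only [Finset.mem_range] at hk1 hk2
        have h0 : m + 1 - 2 * k = 0 := by omega
        simp [h0])]
      simp only [Nat.add_sub_cancel, dH, Finset.mul_sum]
      apply Finset.sum_congr rfl
      intro k hk
      simp only [Finset.mem_range] at hk
      have h2k : 2 * k ≤ m := by omega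
      have h1 : m + 1 - 2 * k = (m - 2 * k) + 1 := by omega
      have h1' : m + 1 - 2 * k - 1 = m - 2 * k := by omega
      have h2 : m + 1 - k = (m - k) + 1 := by omega
      have c1 : ((m + 1).factorial : ℝ) = (((m + 1 : ℕ)) : ℝ) * (m.factorial : ℝ) := by
        rw [Nat.factorial_succ]; push_cast; ring
      have c2 : ((m - 2 * k + 1).factorial : ℝ)
          = ((((m - 2 * k : ℕ)) : ℝ) + 1) * ((m - 2 * k).factorial : ℝ) := by
        rw [Nat.factorial_succ]; push_cast; ring
      have c3 : ((m + 1 - 2 * k : ℕ) : ℝ) = (((m - 2 * k : ℕ)) : ℝ) + 1 := by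
        rw [h1]; push_cast; ring
      have c4 : ((m - 2 * k + 1 : ℕ) : ℝ) = (((m - 2 * k : ℕ)) : ℝ) + 1 := by push_cast; ring
      simp only [h1, h1', h2, pow_succ, c1, c2, c3, c4, Nat.add_sub_cancel, ← hc]
      have f1 : ((m - 2 * k).factorial : ℝ) ≠ 0 := Nat.cast_ne_zero.mpr (Nat.factorial_ne_zero _)
      have f2 : ((k).factorial : ℝ) ≠ 0 := Nat.cast_ne_zero.mpr (Nat.factorial_ne_zero _)
      have f3 : (((m - 2 * k : ℕ)) : ℝ) + 1 ≠ 0 := by positivity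
      exact alg1 _ _ _ _ _ _ _ _ _ f1 f2 f3
  exact e ▸ h

theorem stmt3 (l : ℝ) (hl : 0 < l) (n r : ℕ) (hr : r ≤ n) (x y : ℝ) :
    iteratedDeriv r (fun x' => dH l x' y n) x =
      ((Nat.factorial n : ℝ) / (Nat.factorial (n - r) : ℝ)) *
        (Real.log (1 + l) / l) ^ r * dH l x y (n - r) := by
  induction r generalizing x with
  | zero =>
    have hne : (n.factorial : ℝ) ≠ 0 := Nat.cast_ne_zero.mpr (Nat.factorial_ne_zero n)
    simp [iteratedDeriv_zero, div_self hne]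
  | succ r ih =>
    have hrn : r ≤ n := Nat.le_of_succ_le hr
    rw [iteratedDeriv_succ]
    have hfun : iteratedDeriv r (fun x' => dH l x' y n) = fun x' =>
        ((Nat.factorial n : ℝ) / (Nat.factorial (n - r) : ℝ)) *
          (Real.log (1 + l) / l) ^ r * dH l x' y (n - r) :=
      funext fun x' => ih hrn x'
    rw [hfun]
    have hd := ((dH_hasDerivAt l y (n - r) x).const_mul
      ((Nat.factorial n : ℝ) / (Nat.factorial (n - r) : ℝ) * (Real.log (1 + l) / l) ^ r)).deriv
    rw [hd]
    have e1 : n - (r + 1) = n - r - 1 := by omega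
    have hnr : n - r = (n - r - 1) + 1 := by omega
    have hfac : ((n - r).factorial : ℝ) = ((n - r : ℕ) : ℝ) * ((n - r - 1).factorial : ℝ) := by
      rw [hnr, Nat.factorial_succ]; push_cast; ring
    have f1 : ((n - r - 1).factorial : ℝ) ≠ 0 := Nat.cast_ne_zero.mpr (Nat.factorial_ne_zero _)
    have f2 : ((n - r : ℕ) : ℝ) ≠ 0 := by
      have : 1 ≤ n - r := by omega
      positivity
    rw [e1, hfac, pow_succ]
    exact alg2 _ _ _ _ _ _ f1 f2
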